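/- Let ν be a probability measure on a measurable space 𝒳 (the data distribution), let ϱ be a probability measure on a measurable space Θ (the distribution over parameters), and let p : Θ × 𝒳 → (0,∞) be a measurable function (the conditional model density). Define μ(x) = ∫_Θ p(θ, x) dϱ(θ) and assume μ(x) ∈ (0,∞) for ν-a.e. x, and that all the expectations appearing below are finite. Then for every positive integer k: ∫_𝒳 −log μ(x) dν(x) ≤ ∫_Θ ( ∫_𝒳 −log p(θ, x) dν(x) ) dϱ(θ) − ∑_{i=1}^{2k−1} ((−1)^i / i) · ∫_𝒳 ( ∫_Θ (p(θ, x) − μ(x))^i dϱ(θ) ) / μ(x)^i dν(x). -/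

import Mathlib

open MeasureTheory ProbabilityTheory Finset

noncomputable def altF (n : ℕ) (s : ℝ) : ℝ :=
  (∑ i ∈ Finset.Icc 1 n, (-1:ℝ)^(i+1) * s^i / i) - Real.log (1+s)

lemma altF_zero (n : ℕ) : altF n 0 = 0 := by
  unfold altF
  rw [Finset.sum_eq_zero]
  · simp
  · intro i hi
    have : i ≠ 0 := by have := (Finset.mem_Icc.1 hi).1; omega
    simp [zero_pow this]

lemma altF_hasDerivAt {n : ℕ} (hn : Odd n) {s : ℝ} (hs : -1 < s) :
    HasDerivAt (altF n) (s^n/(1+s)) s := by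
  have h1s : (1:ℝ) + s ≠ 0 := by linarith
  have hsum : HasDerivAt (fun x : ℝ => ∑ i ∈ Finset.Icc 1 n, (-1:ℝ)^(i+1) * x^i / i)
      (∑ i ∈ Finset.Icc 1 n, (-1:ℝ)^(i+1) * s^(i-1)) s := by
    apply HasDerivAt.fun_sum
    intro i hi
    have hi1 : 1 ≤ i := (Finset.mem_Icc.1 hi).1
    have := (((hasDerivAt_pow i s).const_mul ((-1:ℝ)^(i+1))).div_const (i:ℝ))
    refine this.congr_deriv ?_
    have hi0 : (i:ℝ) ≠ 0 := by positivity
    field_simp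
  have hlog : HasDerivAt (fun x : ℝ => Real.log (1 + x)) (1/(1+s)) s := by
    have h1 : HasDerivAt (fun x : ℝ => 1 + x) 1 s := (hasDerivAt_id s).const_add 1
    have := (Real.hasDerivAt_log h1s).comp s h1
    exact this.congr_deriv (by simp)
  have hsumval : ∑ i ∈ Finset.Icc 1 n, (-1:ℝ)^(i+1) * s^(i-1)
      = (s^n + 1)/(1 + s) := by
    have h1 : ∑ i ∈ Finset.Icc 1 n, (-1:ℝ)^(i+1) * s^(i-1)
        = ∑ j ∈ Finset.range n, (-s)^j := by
      rw [← Finset.Ico_add_one_right_eq_Icc, Finset.sum_Ico_eq_sum_range]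
      apply Finset.sum_congr (by norm_num)
      intro j hj
      have h2 : (-1:ℝ)^(1+j+1) = (-1:ℝ)^j := by
        rw [show 1+j+1 = j+2 by ring, pow_add]
        norm_num
      rw [show 1+j-1 = j from by omega, h2, show (-s) = (-1)*s from by ring, mul_pow]
    rw [h1, geom_sum_eq (by intro h; apply h1s; linarith : (-s:ℝ) ≠ 1)]
    rw [hn.neg_pow]
    rw [div_eq_div_iff (by intro h; apply h1s; linarith) h1s]
    ring
  have := hsum.sub hlog
  rw [hsumval, div_sub_div_same] at this
  unfold altF
  refine this.congr_deriv ?_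
  ring

lemma log_le_alt_sum {n : ℕ} (hn : Odd n) {t : ℝ} (ht : -1 < t) :
    Real.log (1 + t) ≤ ∑ i ∈ Finset.Icc 1 n, (-1 : ℝ) ^ (i + 1) * t ^ i / i := by
  suffices h : 0 ≤ altF n t by
    unfold altF at h
    linarith
  rcases le_or_gt 0 t with h0 | h0
  · have hmono : MonotoneOn (altF n) (Set.Icc 0 t) := by
      apply monotoneOn_of_deriv_nonneg (convex_Icc 0 t)
      · intro x hx
        exact ((altF_hasDerivAt hn (by have := hx.1; linarith)).differentiableAt).continuousAt.continuousWithinAt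
      · intro x hx
        rw [interior_Icc] at hx
        exact ((altF_hasDerivAt hn (by have := hx.1; linarith)).differentiableAt).differentiableWithinAt
      · intro x hx
        rw [interior_Icc] at hx
        rw [(altF_hasDerivAt hn (by have := hx.1; linarith : (-1:ℝ) < x)).deriv]
        have : (0:ℝ) < x := hx.1
        positivity
    have := hmono (Set.left_mem_Icc.2 h0) (Set.right_mem_Icc.2 h0) h0
    rw [altF_zero] at this
    linarith
  · have hanti : AntitoneOn (altF n) (Set.Icc t 0) := by
      apply antitoneOn_of_deriv_nonpos (convex_Icc t 0)
      · intro x hx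
        exact ((altF_hasDerivAt hn (by have := hx.1; linarith)).differentiableAt).continuousAt.continuousWithinAt
      · intro x hx
        rw [interior_Icc] at hx
        exact ((altF_hasDerivAt hn (by have := hx.1; linarith)).differentiableAt).differentiableWithinAt
      · intro x hx
        rw [interior_Icc] at hx
        rw [(altF_hasDerivAt hn (by have := hx.1; linarith : (-1:ℝ) < x)).deriv]
        apply div_nonpos_of_nonpos_of_nonneg
        · exact hn.pow_nonpos (le_of_lt hx.2)
        · have := hx.1; linarith
    have := hanti (Set.left_mem_Icc.2 h0.le) (Set.right_mem_Icc.2 h0.le) h0.le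
    rw [altF_zero] at this
    linarith

lemma integral_log_le {Θ : Type*} [MeasurableSpace Θ] (ϱ : Measure Θ) [IsProbabilityMeasure ϱ]
    (f : Θ → ℝ) (hf : ∀ θ, 0 < f θ) {m : ℝ} (hm : 0 < m) {n : ℕ} (hn : Odd n)
    (hlog : Integrable (fun θ => Real.log (f θ)) ϱ)
    (hpow : ∀ i ∈ Finset.Icc 1 n, Integrable (fun θ => (f θ - m)^i) ϱ) :
    (∫ θ, Real.log (f θ) ∂ϱ) - Real.log m ≤
      ∑ i ∈ Finset.Icc 1 n, ((-1:ℝ)^(i+1) / i) * ((∫ θ, (f θ - m)^i ∂ϱ) / m^i) := by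
  have hm0 : m ≠ 0 := ne_of_gt hm
  have h1 : (∫ θ, Real.log (f θ) ∂ϱ) - Real.log m
      = ∫ θ, (Real.log (f θ) - Real.log m) ∂ϱ := by
    rw [integral_sub hlog (integrable_const _), integral_const]
    simp
  have h2 : ∀ θ, Real.log (f θ) - Real.log m
      ≤ ∑ i ∈ Finset.Icc 1 n, (-1:ℝ)^(i+1) * ((f θ - m)/m)^i / i := by
    intro θ
    have hq : 0 < f θ / m := div_pos (hf θ) hm
    have heq : (f θ - m)/m = f θ / m - 1 := by field_simp
    have ht : -1 < (f θ - m)/m := by rw [heq]; linarith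
    have := log_le_alt_sum hn ht
    rw [show (1 + (f θ - m)/m) = f θ / m from by field_simp; ring] at this
    rwa [Real.log_div (ne_of_gt (hf θ)) hm0] at this
  have hrw : ∀ i : ℕ, (fun θ => (-1:ℝ)^(i+1) * ((f θ - m)/m)^i / (i:ℝ))
      = fun θ => ((-1:ℝ)^(i+1)/((i:ℝ) * m^i)) * (f θ - m)^i := by
    intro i; funext θ; rw [div_pow]; ring
  have hInt2 : Integrable
      (fun θ => ∑ i ∈ Finset.Icc 1 n, (-1:ℝ)^(i+1) * ((f θ - m)/m)^i / i) ϱ := by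
    apply integrable_finset_sum
    intro i hi
    rw [hrw i]
    exact (hpow i hi).const_mul _
  calc (∫ θ, Real.log (f θ) ∂ϱ) - Real.log m
      = ∫ θ, (Real.log (f θ) - Real.log m) ∂ϱ := h1
    _ ≤ ∫ θ, ∑ i ∈ Finset.Icc 1 n, (-1:ℝ)^(i+1) * ((f θ - m)/m)^i / i ∂ϱ :=
        integral_mono (hlog.sub (integrable_const _)) hInt2 h2
    _ = ∑ i ∈ Finset.Icc 1 n, ∫ θ, (-1:ℝ)^(i+1) * ((f θ - m)/m)^i / i ∂ϱ := by
        apply integral_finset_sum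
        intro i hi
        rw [hrw i]
        exact (hpow i hi).const_mul _
    _ = ∑ i ∈ Finset.Icc 1 n, ((-1:ℝ)^(i+1) / i) * ((∫ θ, (f θ - m)^i ∂ϱ) / m^i) := by
        apply Finset.sum_congr rfl
        intro i hi
        rw [hrw i, integral_const_mul]
        ring

/-- Let `ν` be a probability measure on `𝒳` (the data distribution), `ϱ` a
probability measure on `Θ` (the distribution over parameters), and `p : Θ × 𝒳 → (0,∞)` a
measurable conditional model density. Define `μ(x) = ∫ p(θ,x) dϱ(θ)` and assume `μ(x) > 0`
for `ν`-a.e. `x` and that all the relevant expectations are finite. Then for every `k ≥ 1`: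
`∫ −log μ(x) dν(x) ≤ ∫ (∫ −log p(θ,x) dν(x)) dϱ(θ)
  − ∑_{i=1}^{2k−1} ((−1)^i/i)·∫ (∫ (p(θ,x) − μ(x))^i dϱ(θ))/μ(x)^i dν(x)`. -/
theorem cross_entropy_higher_order_bound
    {𝒳 Θ : Type*} [MeasurableSpace 𝒳] [MeasurableSpace Θ]
    (ν : Measure 𝒳) [IsProbabilityMeasure ν]
    (ϱ : Measure Θ) [IsProbabilityMeasure ϱ]
    (p : Θ → 𝒳 → ℝ) (hp : Measurable (Function.uncurry p))
    (hppos : ∀ θ x, 0 < p θ x)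
    (k : ℕ) (hk : 0 < k)
    (μ : 𝒳 → ℝ) (hμ : ∀ x, μ x = ∫ θ, p θ x ∂ϱ)
    (hμpos : ∀ᵐ x ∂ν, 0 < μ x)
    (hint1 : ∀ x, Integrable (fun θ => p θ x) ϱ)
    (hint2 : Integrable (fun q : Θ × 𝒳 => Real.log (p q.1 q.2)) (ϱ.prod ν))
    (hint3 : Integrable (fun x => Real.log (μ x)) ν)
    (hint4 : ∀ x, ∀ i ∈ Finset.Icc 1 (2 * k - 1),
      Integrable (fun θ => (p θ x - μ x) ^ i) ϱ)
    (hint5 : ∀ i ∈ Finset.Icc 1 (2 * k - 1),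
      Integrable (fun x => (∫ θ, (p θ x - μ x) ^ i ∂ϱ) / μ x ^ i) ν)
    (hint6 : ∀ x, Integrable (fun θ => Real.log (p θ x)) ϱ) :
    ∫ x, -Real.log (μ x) ∂ν
      ≤ (∫ θ, (∫ x, -Real.log (p θ x) ∂ν) ∂ϱ)
        - ∑ i ∈ Finset.Icc 1 (2 * k - 1),
            ((-1 : ℝ) ^ i / (i : ℝ)) *
              ∫ x, (∫ θ, (p θ x - μ x) ^ i ∂ϱ) / μ x ^ i ∂ν := by
  set n := 2 * k - 1 with hn'
  have hn : Odd n := ⟨k - 1, by omega⟩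
  -- Integrability of x ↦ ∫ θ, log (p θ x)
  have hIntLog : Integrable (fun x => ∫ θ, Real.log (p θ x) ∂ϱ) ν :=
    hint2.integral_prod_right
  -- swap the double integral
  have hswap : ∫ θ, (∫ x, -Real.log (p θ x) ∂ν) ∂ϱ
      = -∫ x, (∫ θ, Real.log (p θ x) ∂ϱ) ∂ν := by
    have h1 : ∫ θ, (∫ x, -Real.log (p θ x) ∂ν) ∂ϱ
        = -∫ θ, (∫ x, Real.log (p θ x) ∂ν) ∂ϱ := by
      rw [← integral_neg]
      congr 1
      funext θ
      rw [integral_neg]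
    rw [h1, MeasureTheory.integral_integral_swap hint2]
  have hLHS : ∫ x, -Real.log (μ x) ∂ν = -∫ x, Real.log (μ x) ∂ν := integral_neg _
  -- the core inequality
  have hcore : ∫ x, ((∫ θ, Real.log (p θ x) ∂ϱ) - Real.log (μ x)) ∂ν
      ≤ ∑ i ∈ Finset.Icc 1 n, ((-1:ℝ)^(i+1) / i) *
          ∫ x, (∫ θ, (p θ x - μ x)^i ∂ϱ) / μ x ^ i ∂ν := by
    have hi2 : Integrable (fun x => ∑ i ∈ Finset.Icc 1 n,
        ((-1:ℝ)^(i+1) / i) * ((∫ θ, (p θ x - μ x)^i ∂ϱ) / μ x ^ i)) ν :=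
      integrable_finset_sum _ (fun i hi => (hint5 i hi).const_mul _)
    have hae : ∀ᵐ x ∂ν, (∫ θ, Real.log (p θ x) ∂ϱ) - Real.log (μ x)
        ≤ ∑ i ∈ Finset.Icc 1 n,
            ((-1:ℝ)^(i+1) / i) * ((∫ θ, (p θ x - μ x)^i ∂ϱ) / μ x ^ i) := by
      filter_upwards [hμpos] with x hx
      exact integral_log_le ϱ (fun θ => p θ x) (fun θ => hppos θ x) hx hn
        (hint6 x) (hint4 x)
    calc ∫ x, ((∫ θ, Real.log (p θ x) ∂ϱ) - Real.log (μ x)) ∂ν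
        ≤ ∫ x, ∑ i ∈ Finset.Icc 1 n,
            ((-1:ℝ)^(i+1) / i) * ((∫ θ, (p θ x - μ x)^i ∂ϱ) / μ x ^ i) ∂ν :=
          integral_mono_ae (hIntLog.sub hint3) hi2 hae
      _ = ∑ i ∈ Finset.Icc 1 n, ((-1:ℝ)^(i+1) / i) *
            ∫ x, (∫ θ, (p θ x - μ x)^i ∂ϱ) / μ x ^ i ∂ν := by
          rw [integral_finset_sum _ (fun i hi => (hint5 i hi).const_mul _)]
          exact Finset.sum_congr rfl (fun i hi => integral_const_mul _ _)
  have hsub : ∫ x, ((∫ θ, Real.log (p θ x) ∂ϱ) - Real.log (μ x)) ∂ν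
      = (∫ x, (∫ θ, Real.log (p θ x) ∂ϱ) ∂ν) - ∫ x, Real.log (μ x) ∂ν :=
    integral_sub hIntLog hint3
  have hsign : ∑ i ∈ Finset.Icc 1 n, ((-1:ℝ)^(i+1) / i) *
          ∫ x, (∫ θ, (p θ x - μ x)^i ∂ϱ) / μ x ^ i ∂ν
      = -∑ i ∈ Finset.Icc 1 n, ((-1:ℝ)^i / i) *
          ∫ x, (∫ θ, (p θ x - μ x)^i ∂ϱ) / μ x ^ i ∂ν := by
    rw [← Finset.sum_neg_distrib]
    apply Finset.sum_congr rfl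
    intro i hi
    rw [pow_succ]
    ring
  rw [hswap, hLHS]
  rw [hsub, hsign] at hcore
  linarith
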